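/- Let φ* be of the generalized highest posterior density form with threshold κ_α > 0 (φ* = 1 on {π > κ_α}, = 0 on {π < κ_α}) with ∫ φ* π dμ = 1 − α, and let φ′ : Ω_Θ → [0,1] satisfy ∫ φ′ π dμ = 1 − α and ∫ φ′ dμ = ∫ φ* dμ. Then (φ* − φ′)(π − κ_α) = 0 μ-almost everywhere; in particular, φ* = φ′ π·μ-almost everywhere on the set {π ≠ κ_α}. -/

import Mathlib

open MeasureTheory ENNReal
open scoped NNReal

lemma nnreal_aux1 (a p k : ℝ≥0) (ha : a ≤ 1) (hk : k ≤ p) :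
    p + k * a = a * p + k + (1 - a) * (p - k) := by
  apply NNReal.coe_injective
  push_cast [NNReal.coe_sub ha, NNReal.coe_sub hk]
  ring

lemma nnreal_aux2 (a p k : ℝ≥0) (hk : p ≤ k) :
    k * a = a * p + a * (k - p) := by
  apply NNReal.coe_injective
  push_cast [NNReal.coe_sub hk]
  ring

/-- Uniqueness of the smallest generalized credible set: any other smallest
generalized credible set of the same level agrees with the generalized
highest posterior density credible set off the level set `{π = κ_α}`,
i.e. `(φ* - φ')(π - κ_α) = 0` almost everywhere. -/
theorem generalized_hpd_unique
    {Ω : Type*} [MeasurableSpace Ω] (μ : Measure Ω) [SigmaFinite μ]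
    (π φstar φ' : Ω → ℝ≥0∞)
    (hπm : Measurable π) (hπ1 : ∫⁻ θ, π θ ∂μ = 1)
    (hφsm : Measurable φstar) (hφ'm : Measurable φ')
    (hφs1 : ∀ θ, φstar θ ≤ 1) (hφ'1 : ∀ θ, φ' θ ≤ 1)
    (κα : ℝ≥0∞) (hκpos : 0 < κα) (hκfin : κα ≠ ∞)
    (α : ℝ) (hα0 : 0 < α) (hα1 : α < 1)
    (hup : ∀ θ, κα < π θ → φstar θ = 1)
    (hdown : ∀ θ, π θ < κα → φstar θ = 0)
    (hlevs : ∫⁻ θ, φstar θ * π θ ∂μ = ENNReal.ofReal (1 - α))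
    (hlev' : ∫⁻ θ, φ' θ * π θ ∂μ = ENNReal.ofReal (1 - α))
    (hsize : ∫⁻ θ, φ' θ ∂μ = ∫⁻ θ, φstar θ ∂μ) :
    ∀ᵐ θ ∂μ, φstar θ = φ' θ ∨ π θ = κα := by
  have h1α : ENNReal.ofReal (1 - α) ≠ ∞ := ofReal_ne_top
  -- finiteness of ∫ φ*
  have hSfin : ∫⁻ θ, φstar θ ∂μ ≠ ∞ := by
    intro hS
    have hle : κα * ∫⁻ θ, φstar θ ∂μ ≤ ENNReal.ofReal (1 - α) := by
      rw [← lintegral_const_mul _ hφsm, ← hlevs]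
      refine lintegral_mono fun θ => ?_
      rcases lt_trichotomy (π θ) κα with h | h | h
      · simp [hdown θ h]
      · rw [mul_comm]; exact mul_le_mul_right h.ge _
      · rw [mul_comm]; exact mul_le_mul_right h.le _
    rw [hS, ENNReal.mul_top hκpos.ne'] at hle
    exact h1α (top_le_iff.mp hle)
  set g : Ω → ℝ≥0∞ := fun θ => (φstar θ - φ' θ) * (π θ - κα) with hgdef
  set h : Ω → ℝ≥0∞ := fun θ => (φ' θ - φstar θ) * (κα - π θ) with hhdef
  have hgm : Measurable g := (hφsm.sub hφ'm).mul (hπm.sub measurable_const)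
  have hhm : Measurable h := (hφ'm.sub hφsm).mul (measurable_const.sub hπm)
  have hπae : ∀ᵐ θ ∂μ, π θ ≠ ∞ :=
    (ae_lt_top hπm (by rw [hπ1]; exact one_ne_top)).mono fun _ hx => hx.ne
  -- pointwise identity a.e.
  have hpt : ∀ᵐ θ ∂μ, φstar θ * π θ + κα * φ' θ
      = φ' θ * π θ + κα * φstar θ + (g θ + h θ) := by
    filter_upwards [hπae] with θ hπθ
    have hφ'fin : φ' θ ≠ ∞ := ((hφ'1 θ).trans_lt one_lt_top).ne
    obtain ⟨p, hp⟩ : ∃ p : ℝ≥0, π θ = p := ⟨(π θ).toNNReal, (coe_toNNReal hπθ).symm⟩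
    obtain ⟨a, ha⟩ : ∃ a : ℝ≥0, φ' θ = a := ⟨(φ' θ).toNNReal, (coe_toNNReal hφ'fin).symm⟩
    obtain ⟨k, hk⟩ : ∃ k : ℝ≥0, κα = k := ⟨κα.toNNReal, (coe_toNNReal hκfin).symm⟩
    have ha1 : a ≤ 1 := by
      have := hφ'1 θ; rw [ha] at this; exact_mod_cast this
    rcases lt_trichotomy (π θ) κα with hlt | heq | hgt
    · have hs0 : φstar θ = 0 := hdown θ hlt
      have hpk : p ≤ k := by rw [hp, hk] at hlt; exact_mod_cast hlt.le
      simp only [hgdef, hhdef, hs0, hp, ha, hk, zero_mul, mul_zero, zero_tsub, tsub_zero,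
        add_zero, zero_add]
      exact_mod_cast nnreal_aux2 a p k hpk
    · simp only [hgdef, hhdef, heq, tsub_self, mul_zero, add_zero]
      ring
    · have hs1 : φstar θ = 1 := hup θ hgt
      have hkp : k ≤ p := by rw [hp, hk] at hgt; exact_mod_cast hgt.le
      have hkp0 : (k : ℝ≥0∞) - (p : ℝ≥0∞) = 0 := by
        rw [← ENNReal.coe_sub]
        exact_mod_cast tsub_eq_zero_of_le hkp
      simp only [hgdef, hhdef, hs1, hp, ha, hk, hkp0, mul_zero, add_zero, one_mul, mul_one]
      exact_mod_cast nnreal_aux1 a p k ha1 hkp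
  -- integrate the identity
  have hint : ∫⁻ θ, (φstar θ * π θ + κα * φ' θ) ∂μ
      = ∫⁻ θ, (φ' θ * π θ + κα * φstar θ + (g θ + h θ)) ∂μ := lintegral_congr_ae hpt
  rw [lintegral_add_left (f := fun θ => φstar θ * π θ) (hφsm.mul hπm), lintegral_add_left (f := fun θ => φ' θ * π θ + κα * φstar θ) ((hφ'm.mul hπm).add
    (measurable_const.mul hφsm)), lintegral_add_left (f := fun θ => φ' θ * π θ) (hφ'm.mul hπm),
    lintegral_const_mul _ hφ'm, lintegral_const_mul _ hφsm, hlevs, hlev', hsize] at hint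
  have hAfin : ENNReal.ofReal (1 - α) + κα * ∫⁻ θ, φstar θ ∂μ ≠ ∞ :=
    ENNReal.add_ne_top.mpr ⟨h1α, ENNReal.mul_ne_top hκfin hSfin⟩
  have hI0 : ∫⁻ θ, (g θ + h θ) ∂μ = 0 := by
    have h2 : (ENNReal.ofReal (1 - α) + κα * ∫⁻ θ, φstar θ ∂μ) + 0
        = (ENNReal.ofReal (1 - α) + κα * ∫⁻ θ, φstar θ ∂μ) + ∫⁻ θ, (g θ + h θ) ∂μ := by
      rw [add_zero]; exact hint
    exact ((ENNReal.add_right_inj hAfin).mp h2).symm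
  rw [lintegral_add_left hgm] at hI0
  obtain ⟨hg0, hh0⟩ := add_eq_zero.mp hI0
  have hgae : ∀ᵐ θ ∂μ, g θ = 0 := (lintegral_eq_zero_iff hgm).mp hg0
  have hhae : ∀ᵐ θ ∂μ, h θ = 0 := (lintegral_eq_zero_iff hhm).mp hh0
  filter_upwards [hgae, hhae] with θ hgθ hhθ
  rcases lt_trichotomy (π θ) κα with hlt | heq | hgt
  · left
    rw [hdown θ hlt]
    rcases mul_eq_zero.mp hhθ with h1 | h2
    · rw [hdown θ hlt, tsub_zero] at h1; exact h1.symm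
    · exact absurd (tsub_eq_zero_iff_le.mp h2) (not_le.mpr hlt)
  · right; exact heq
  · left
    rw [hup θ hgt]
    rcases mul_eq_zero.mp hgθ with h1 | h2
    · rw [hup θ hgt] at h1
      exact le_antisymm (tsub_eq_zero_iff_le.mp h1) (hφ'1 θ)
    · exact absurd (tsub_eq_zero_iff_le.mp h2) (not_le.mpr hgt)
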